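/- Fix integers K, N, a, b with m = a*N − b*K > 0. Let σ ∈ DPT(K,N,a,b), let r ∈ ℤ, and let (x,y), (x',y') ∈ ℤ². Then σ(x,y) = σ(x',y') + r*m if and only if there exists s ∈ ℤ such that (x, y) = (x' + s*K + r*a, y' − s*N − r*b). -/

import Mathlib

/-- A standard doubly periodic tableau with respect to `(K, N, a, b)`. -/
def IsDPT (K N a b : ℤ) (σ : ℤ × ℤ → ℤ) : Prop :=
  Function.Surjective σ ∧
  (∀ x y : ℤ, σ (x + K, y - N) = σ (x, y)) ∧
  (∀ x y : ℤ, σ (x + a, y - b) = σ (x, y) + (a * N - b * K)) ∧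
  (∀ x y : ℤ, σ (x, y) < σ (x + 1, y)) ∧
  (∀ x y : ℤ, σ (x, y) < σ (x, y + 1))

/-- For `σ ∈ DPT(K,N,a,b)`: `σ(x,y) = σ(x',y') + r*m` iff
`(x,y) = (x' + s*K + r*a, y' − s*N − r*b)` for some `s ∈ ℤ`. -/
theorem dpt_value_shift_iff (K N a b : ℤ) (hm : 0 < a * N - b * K)
    (σ : ℤ × ℤ → ℤ) (hσ : IsDPT K N a b σ) (r x y x' y' : ℤ) :
    σ (x, y) = σ (x', y') + r * (a * N - b * K) ↔
      ∃ s : ℤ, x = x' + s * K + r * a ∧ y = y' - s * N - r * b := by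
  obtain ⟨hsurj, h1, h2, -, -⟩ := hσ
  set m : ℤ := a * N - b * K with hm_def
  -- iterated (K, -N) periodicity
  have lemA : ∀ (s u v : ℤ), σ (u + s * K, v - s * N) = σ (u, v) := by
    intro s
    induction s using Int.induction_on with
    | zero => intro u v; norm_num
    | succ n ih =>
      intro u v
      have h := h1 (u + (n : ℤ) * K) (v - (n : ℤ) * N)
      have e1 : u + ((n : ℤ) + 1) * K = u + (n : ℤ) * K + K := by ring
      have e2 : v - ((n : ℤ) + 1) * N = v - (n : ℤ) * N - N := by ring
      rw [e1, e2, h, ih]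
    | pred n ih =>
      intro u v
      have h := h1 (u + (-(n : ℤ) - 1) * K) (v - (-(n : ℤ) - 1) * N)
      have e1 : u + (-(n : ℤ) - 1) * K + K = u + (-(n : ℤ)) * K := by ring
      have e2 : v - (-(n : ℤ) - 1) * N - N = v - (-(n : ℤ)) * N := by ring
      rw [e1, e2] at h
      rw [← h, ih]
  -- iterated (a, -b) quasi-periodicity
  have lemB : ∀ (t u v : ℤ), σ (u + t * a, v - t * b) = σ (u, v) + t * m := by
    intro t
    induction t using Int.induction_on with
    | zero => intro u v; norm_num
    | succ n ih =>
      intro u v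
      have h := h2 (u + (n : ℤ) * a) (v - (n : ℤ) * b)
      have e1 : u + ((n : ℤ) + 1) * a = u + (n : ℤ) * a + a := by ring
      have e2 : v - ((n : ℤ) + 1) * b = v - (n : ℤ) * b - b := by ring
      rw [e1, e2, h, ih]
      ring
    | pred n ih =>
      intro u v
      have h := h2 (u + (-(n : ℤ) - 1) * a) (v - (-(n : ℤ) - 1) * b)
      have e1 : u + (-(n : ℤ) - 1) * a + a = u + (-(n : ℤ)) * a := by ring
      have e2 : v - (-(n : ℤ) - 1) * b - b = v - (-(n : ℤ)) * b := by ring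
      rw [e1, e2] at h
      linear_combination ih u v - h
  have lemC : ∀ (s t u v : ℤ),
      σ (u + s * K + t * a, v - s * N - t * b) = σ (u, v) + t * m := by
    intro s t u v
    have h := lemB t (u + s * K) (v - s * N)
    rw [lemA s u v] at h
    exact h
  -- setup: Smith-normal-form style generators
  have hd0 : Int.gcd K a ≠ 0 := by
    intro h
    obtain ⟨hK0, ha0⟩ := Int.gcd_eq_zero_iff.mp h
    rw [hm_def, hK0, ha0] at hm
    simp at hm
  set D : ℕ := Int.gcd K a with hD
  have hdpos : 0 < (D : ℤ) := by exact_mod_cast Nat.pos_of_ne_zero hd0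
  obtain ⟨K1, hK1⟩ : (D : ℤ) ∣ K := Int.gcd_dvd_left K a
  obtain ⟨a1, ha1⟩ : (D : ℤ) ∣ a := Int.gcd_dvd_right K a
  set u : ℤ := Int.gcdA K a with hu
  set v : ℤ := Int.gcdB K a with hv
  have hbez : (D : ℤ) = K * u + a * v := Int.gcd_eq_gcd_ab K a
  set e : ℤ := a1 * N - b * K1 with hef
  have hme : m = (D : ℤ) * e := by
    linear_combination hm_def + N * ha1 - b * hK1 + (D : ℤ) * hef
  have hepos : 0 < e := by
    by_contra h
    push_neg at h
    nlinarith [mul_nonpos_of_nonneg_of_nonpos hdpos.le h]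
  -- reduction to a fundamental domain
  have reduce : ∀ (p q : ℤ), ∃ i j s t : ℤ, 0 ≤ i ∧ i < D ∧ 0 ≤ j ∧ j < e ∧
      p = i + s * K + t * a ∧ q = j - s * N - t * b := by
    intro p q
    set q1 : ℤ := p / (D : ℤ) with hq1d
    set i : ℤ := p % (D : ℤ) with hid
    have hp1 : (D : ℤ) * q1 + i = p := Int.mul_ediv_add_emod p D
    set c : ℤ := -(u * N + v * b) with hc
    set q2 : ℤ := (q - q1 * c) / e with hq2d
    set j : ℤ := (q - q1 * c) % e with hjd
    have hp2 : e * q2 + j = q - q1 * c := Int.mul_ediv_add_emod _ e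
    refine ⟨i, j, q1 * u - q2 * a1, q1 * v + q2 * K1,
      Int.emod_nonneg p hdpos.ne', Int.emod_lt_of_pos p hdpos,
      Int.emod_nonneg _ hepos.ne', Int.emod_lt_of_pos _ hepos, ?_, ?_⟩
    · linear_combination (-1 : ℤ) * hp1 + q1 * hbez + q2 * a1 * hK1 - q2 * K1 * ha1
    · linear_combination (-1 : ℤ) * hp2 + q1 * hc + q2 * hef
  -- counting
  set E : ℕ := e.toNat with hEd
  have hE : (E : ℤ) = e := Int.toNat_of_nonneg hepos.le
  set M : ℕ := D * E with hMd
  have hM : (M : ℤ) = m := by push_cast [hMd]; rw [hE]; linarith [hme]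
  have hMpos : 0 < M := by
    have : 0 < E := by omega
    exact Nat.mul_pos (Nat.pos_of_ne_zero hd0) this
  haveI : NeZero M := ⟨hMpos.ne'⟩
  have hmz : ((m : ℤ) : ZMod M) = 0 := by
    rw [← hM]
    exact_mod_cast ZMod.natCast_self M
  set F : Fin D × Fin E → ZMod M :=
    fun p => ((σ ((p.1 : ℤ), (p.2 : ℤ)) : ℤ) : ZMod M) with hF
  have hFsurj : Function.Surjective F := by
    intro z
    obtain ⟨w, hw⟩ := ZMod.intCast_surjective z
    obtain ⟨⟨p, q⟩, hpq⟩ := hsurj w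
    obtain ⟨i, j, s, t, hi0, hiD, hj0, hje, hpe, hqe⟩ := reduce p q
    have hval : σ (p, q) = σ (i, j) + t * m := by
      rw [hpe, hqe]; exact lemC s t i j
    have hiN : i.toNat < D := by omega
    have hjN : j.toNat < E := by omega
    refine ⟨(⟨i.toNat, hiN⟩, ⟨j.toNat, hjN⟩), ?_⟩
    show ((σ (((i.toNat : ℤ)), ((j.toNat : ℤ))) : ℤ) : ZMod M) = z
    rw [Int.toNat_of_nonneg hi0, Int.toNat_of_nonneg hj0]
    have hsij : σ (i, j) = σ (p, q) - t * m := by linarith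
    calc ((σ (i, j) : ℤ) : ZMod M)
        = ((σ (p, q) - t * m : ℤ) : ZMod M) := by rw [hsij]
      _ = ((σ (p, q) : ℤ) : ZMod M) - (t : ZMod M) * ((m : ℤ) : ZMod M) := by
          push_cast; ring
      _ = (w : ZMod M) := by rw [hmz, hpq]; ring
      _ = z := hw
  have hFinj : Function.Injective F := by
    have hcard : Fintype.card (Fin D × Fin E) = Fintype.card (ZMod M) := by
      simp [ZMod.card, hMd]
    exact ((Fintype.bijective_iff_surjective_and_card F).mpr ⟨hFsurj, hcard⟩).1
  have inj2 : ∀ i j i' j' : ℤ, 0 ≤ i → i < D → 0 ≤ j → j < e →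
      0 ≤ i' → i' < D → 0 ≤ j' → j' < e →
      (∃ t : ℤ, σ (i, j) = σ (i', j') + t * m) → i = i' ∧ j = j' := by
    intro i j i' j' hi0 hiD hj0 hje hi0' hiD' hj0' hje' ⟨t, ht⟩
    have hiN : i.toNat < D := by omega
    have hjN : j.toNat < E := by omega
    have hiN' : i'.toNat < D := by omega
    have hjN' : j'.toNat < E := by omega
    have hFeq : F (⟨i.toNat, hiN⟩, ⟨j.toNat, hjN⟩)
        = F (⟨i'.toNat, hiN'⟩, ⟨j'.toNat, hjN'⟩) := by
      show ((σ (((i.toNat : ℤ)), ((j.toNat : ℤ))) : ℤ) : ZMod M)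
        = ((σ (((i'.toNat : ℤ)), ((j'.toNat : ℤ))) : ℤ) : ZMod M)
      rw [Int.toNat_of_nonneg hi0, Int.toNat_of_nonneg hj0,
        Int.toNat_of_nonneg hi0', Int.toNat_of_nonneg hj0', ht]
      push_cast
      rw [hmz]
      ring
    have := hFinj hFeq
    rw [Prod.mk.injEq, Fin.mk.injEq, Fin.mk.injEq] at this
    omega
  constructor
  · intro hval
    obtain ⟨i, j, s, t, hi0, hiD, hj0, hje, hx1, hy1⟩ := reduce x y
    obtain ⟨i', j', s', t', hi0', hiD', hj0', hje', hx2, hy2⟩ := reduce x' y'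
    have e1 : σ (x, y) = σ (i, j) + t * m := by rw [hx1, hy1]; exact lemC s t i j
    have e2 : σ (x', y') = σ (i', j') + t' * m := by
      rw [hx2, hy2]; exact lemC s' t' i' j'
    have hsig : σ (i, j) = σ (i', j') + (t' + r - t) * m := by
      linear_combination hval - e1 + e2
    obtain ⟨hii, hjj⟩ := inj2 i j i' j' hi0 hiD hj0 hje hi0' hiD' hj0' hje'
      ⟨t' + r - t, hsig⟩
    have hsame : σ (i, j) = σ (i', j') := by rw [hii, hjj]
    have hz : (t' + r - t) * m = 0 := by linarith [hsig, hsame]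
    have htt : t = t' + r := by
      rcases mul_eq_zero.mp hz with h | h
      · omega
      · omega
    refine ⟨s - s', ?_, ?_⟩
    · linear_combination hx1 - hx2 + hii + a * htt
    · linear_combination hy1 - hy2 + hjj - b * htt
  · rintro ⟨s, hx, hy⟩
    rw [hx, hy]
    exact lemC s r x' y'
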